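/- Let Λ be a finite abelian group and n ≥ 1. Then the group ring R = (ZMod n)[Λ] is a self-injective ring, i.e., R is injective as a module over itself. -/

import Mathlib

open CategoryTheory AddMonoidAlgebra

universe u

lemma zmod_dvd_of_ann (n : ℕ) [NeZero n] {a b : ZMod n}
    (h : ∀ m : ZMod n, m * a = 0 → m * b = 0) : a ∣ b := by
  have hn : 0 < n := Nat.pos_of_ne_zero (NeZero.ne n)
  set d := Nat.gcd a.val n with hd
  have hdn : d ∣ n := Nat.gcd_dvd_right _ _
  have hda : d ∣ a.val := Nat.gcd_dvd_left _ _
  have hd0 : 0 < d := Nat.gcd_pos_of_pos_right _ hn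
  have hnd0 : 0 < n / d := Nat.div_pos (Nat.le_of_dvd hn hdn) hd0
  have ha : ((a.val : ℕ) : ZMod n) = a := by rw [ZMod.natCast_val, ZMod.cast_id]
  have hb : ((b.val : ℕ) : ZMod n) = b := by rw [ZMod.natCast_val, ZMod.cast_id]
  -- (n/d) * a = 0
  have h1 : ((n / d : ℕ) : ZMod n) * a = 0 := by
    rw [← ha, ← Nat.cast_mul, ZMod.natCast_eq_zero_iff]
    refine ⟨a.val / d, ?_⟩
    rw [← Nat.mul_div_assoc _ hda, Nat.mul_comm n a.val, Nat.mul_div_assoc _ hdn, Nat.mul_comm]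
  have h2 := h _ h1
  -- n ∣ (n/d) * b.val, deduce d ∣ b.val
  have h3 : n ∣ (n / d) * b.val := by
    rw [← ZMod.natCast_eq_zero_iff, Nat.cast_mul, hb]
    exact h2
  obtain ⟨t, ht⟩ := h3
  have h4 : d ∣ b.val := by
    refine ⟨t, ?_⟩
    have hnd : n = (n / d) * d := (Nat.div_mul_cancel hdn).symm
    apply Nat.eq_of_mul_eq_mul_left hnd0
    rw [ht]
    conv_lhs => rw [hnd]
    ring
  -- (d : ZMod n) ∣ b
  have h5 : ((d : ℕ) : ZMod n) ∣ b := by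
    obtain ⟨t, ht⟩ := h4
    exact ⟨(t : ℕ), by rw [← hb, ht, Nat.cast_mul]⟩
  -- a ∣ (d : ZMod n)
  have h6 : a ∣ ((d : ℕ) : ZMod n) := by
    have hg := Nat.gcd_eq_gcd_ab a.val n
    refine ⟨((Nat.gcdA a.val n : ℤ) : ZMod n), ?_⟩
    have : ((d : ℤ) : ZMod n) = ((a.val * Nat.gcdA a.val n + n * Nat.gcdB a.val n : ℤ) : ZMod n) := by
      exact_mod_cast congrArg (fun z : ℤ => ((z : ZMod n))) hg
    push_cast at this
    rw [ZMod.natCast_self, zero_mul, add_zero, ha] at this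
    exact_mod_cast this
  exact dvd_trans h6 h5

lemma zmod_baer (n : ℕ) [NeZero n] : Module.Baer (ZMod n) (ZMod n) := by
  haveI : IsPrincipalIdealRing (ZMod n) :=
    IsPrincipalIdealRing.of_surjective (Int.castRingHom (ZMod n)) ZMod.intCast_surjective
  intro I g
  obtain ⟨a, rfl⟩ : ∃ a, I = Ideal.span {a} := (IsPrincipalIdealRing.principal I).principal
  have hmem : a ∈ Ideal.span {a} := Ideal.subset_span rfl
  set b := g ⟨a, hmem⟩ with hbdef
  have hann : ∀ m : ZMod n, m * a = 0 → m * b = 0 := by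
    intro m hm
    have h1 : (⟨m * a, Ideal.mul_mem_left _ m hmem⟩ : Ideal.span {a}) = m • ⟨a, hmem⟩ :=
      Subtype.ext (by simp [smul_eq_mul])
    have h2 : (⟨m * a, Ideal.mul_mem_left _ m hmem⟩ : Ideal.span {a}) = 0 :=
      Subtype.ext (by simpa using hm)
    calc m * b = m • g ⟨a, hmem⟩ := by rw [smul_eq_mul]
    _ = g (m • ⟨a, hmem⟩) := (_root_.map_smul g m _).symm
    _ = g 0 := by rw [← h1, h2]
    _ = 0 := map_zero g
  obtain ⟨c, hc⟩ := zmod_dvd_of_ann n hann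
  refine ⟨{ toFun := fun x => x * c,
            map_add' := fun x y => add_mul x y c,
            map_smul' := fun m x => by simp [smul_eq_mul, mul_assoc] }, ?_⟩
  intro x hx
  obtain ⟨m, rfl⟩ := Ideal.mem_span_singleton'.mp hx
  have h1 : (⟨m * a, hx⟩ : Ideal.span {a}) = m • ⟨a, hmem⟩ := Subtype.ext (by simp [smul_eq_mul])
  calc (m * a) * c = m * (a * c) := mul_assoc _ _ _
  _ = m * b := by rw [← hc]
  _ = m • g ⟨a, hmem⟩ := by rw [smul_eq_mul]
  _ = g (m • ⟨a, hmem⟩) := (_root_.map_smul g m _).symm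
  _ = g ⟨m * a, hx⟩ := by rw [← h1]

lemma zmod_selfinj (n : ℕ) [NeZero n] : Module.Injective (ZMod n) (ZMod n) :=
  (zmod_baer n).injective

lemma group_ring_selfinj (n : ℕ) [NeZero n] (Λ : Type u) [AddCommGroup Λ] [Finite Λ] :
    Module.Injective (AddMonoidAlgebra (ZMod n) Λ) (AddMonoidAlgebra (ZMod n) Λ) := by
  classical
  haveI := Fintype.ofFinite Λ
  set k := ZMod n
  set R := AddMonoidAlgebra k Λ with hR
  haveI : Module.Injective k k := zmod_selfinj n
  haveI : CategoryTheory.Injective (ModuleCat.of k k) :=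
    Module.injective_object_of_injective_module k k
  let f : k →+* R := AddMonoidAlgebra.singleZeroRingHom
  let M : ModuleCat.{u} k := ModuleCat.of k (ULift.{u} k)
  let J : ModuleCat.{u} R := (ModuleCat.coextendScalars f).obj M
  haveI hJ : CategoryTheory.Injective J :=
    CategoryTheory.Injective.injective_of_adjoint (ModuleCat.restrictCoextendScalarsAdj f) M
  let T : Type u := (ModuleCat.restrictScalars f).obj (ModuleCat.of R R)
  let toR : T → R := fun x => x
  let ofR : R → T := fun x => x
  have hsmul_eq : ∀ (c : k) (y : R), AddMonoidAlgebra.single 0 c * y = c • y := by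
    intro c y
    refine AddMonoidAlgebra.ext (Finsupp.ext fun l => ?_)
    rw [AddMonoidAlgebra.coeff_single_zero_mul]
    rfl
  -- The Frobenius functionals
  let φ : R → (J : Type u) := fun r =>
    { toFun := fun x : T => ULift.up ((toR x * r).coeff 0)
      map_add' := fun x y => by
        show ULift.up (((toR x + toR y) * r).coeff 0)
          = ULift.up ((toR x * r).coeff 0) + ULift.up ((toR y * r).coeff 0)
        rw [add_mul]; rfl
      map_smul' := fun c x => by
        show ULift.up ((((AddMonoidAlgebra.single 0 c : R) * toR x) * r).coeff 0)
          = ULift.up (c * ((toR x * r).coeff 0))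
        rw [mul_assoc, AddMonoidAlgebra.coeff_single_zero_mul] }
  have hφ : ∀ (r : R) (x : T), φ r x = ULift.up ((toR x * r).coeff 0) := fun _ _ => rfl
  let Φ : R →ₗ[R] J :=
    { toFun := φ
      map_add' := fun r₁ r₂ => LinearMap.ext fun x => by
        show ULift.up ((toR x * (r₁ + r₂)).coeff 0)
          = ULift.up ((toR x * r₁).coeff 0) + ULift.up ((toR x * r₂).coeff 0)
        rw [mul_add]; rfl
      map_smul' := fun s r => LinearMap.ext fun x => by
        show ULift.up ((toR x * (s * r)).coeff 0) = ULift.up (((toR x * s) * r).coeff 0)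
        rw [mul_assoc] }
  have hinj : Function.Injective Φ := by
    rw [injective_iff_map_eq_zero]
    intro r hr
    refine AddMonoidAlgebra.ext (Finsupp.ext fun l => ?_)
    have h1 : Φ r (ofR (AddMonoidAlgebra.single (-l) 1)) = 0 := by rw [hr]; rfl
    have h2 : ((AddMonoidAlgebra.single (-l) (1 : k) * r).coeff 0) = 0 := congrArg ULift.down h1
    rw [AddMonoidAlgebra.coeff_single_mul_apply] at h2
    simpa using h2
  have hsurj : Function.Surjective Φ := by
    intro g
    let gl : T →ₗ[k] ULift.{u} k := g
    set r : R := AddMonoidAlgebra.ofCoeff (Finsupp.equivFunOnFinite.symm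
      (fun l => (gl (ofR (AddMonoidAlgebra.single (-l) 1))).down)) with hrdef
    have hrval : ∀ l : Λ, r.coeff l = (gl (ofR (AddMonoidAlgebra.single (-l) 1))).down := fun l => rfl
    have hofR_smul : ∀ (c : k) (y : R), ofR (c • y) = c • ofR y := by
      intro c y
      show c • y = AddMonoidAlgebra.single 0 c * y
      rw [hsmul_eq]
    have key : ∀ y : R, ((y * r).coeff 0) = (gl (ofR y)).down := by
      intro y
      induction y using AddMonoidAlgebra.induction_on with
      | of a =>
        show ((AddMonoidAlgebra.single a 1 : R) * r).coeff 0
          = (gl (ofR (AddMonoidAlgebra.single a 1))).down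
        rw [AddMonoidAlgebra.coeff_single_mul_apply, add_zero, one_mul, hrval, neg_neg]
      | add p q hp hq =>
        have : gl (ofR (p + q)) = gl (ofR p) + gl (ofR q) := map_add gl (ofR p) (ofR q)
        rw [add_mul, this, AddMonoidAlgebra.coeff_add, Finsupp.add_apply, hp, hq]
        rfl
      | smul c y hy =>
        have h1 : gl (ofR (c • y)) = c • gl (ofR y) := by rw [hofR_smul, map_smul]
        rw [h1, ← hsmul_eq c y, mul_assoc, AddMonoidAlgebra.coeff_single_zero_mul, hy]
        rfl
    refine ⟨r, ?_⟩
    have : (φ r : T →ₗ[k] ULift.{u} k) = gl :=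
      LinearMap.ext fun x => ULift.ext _ _ (key (toR x))
    exact this
  let e : R ≃ₗ[R] J := LinearEquiv.ofBijective Φ ⟨hinj, hsurj⟩
  let iso : ModuleCat.of R R ≅ J :=
    { hom := ModuleCat.ofHom e.toLinearMap
      inv := ModuleCat.ofHom e.symm.toLinearMap
      hom_inv_id := ModuleCat.hom_ext (LinearMap.ext fun x => e.symm_apply_apply x)
      inv_hom_id := ModuleCat.hom_ext (LinearMap.ext fun x => e.apply_symm_apply x) }
  haveI : CategoryTheory.Injective (ModuleCat.of R R) := CategoryTheory.Injective.of_iso iso.symm hJ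
  exact Module.injective_module_of_injective_object R R

/-- For a finite abelian group `Λ` and `n ≥ 1`, the group ring `R = (ZMod n)[Λ]`
is self-injective: `R` is injective as a module over itself. -/
theorem stmt_10 (n : ℕ) [NeZero n] (Λ : Type*) [AddCommGroup Λ] [Finite Λ] :
    Module.Injective (AddMonoidAlgebra (ZMod n) Λ) (AddMonoidAlgebra (ZMod n) Λ) :=
  group_ring_selfinj n Λ
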